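/- Fix integers N ≥ 1, m ≥ 1, a real T > 0, and vectors ξ₀, …, ξ_{N−1} ∈ ℝ^m. Define Z₀ := 0 and Z_i := Σ_{ℓ=0}^{i−1} ξ_ℓ for i = 1, …, N−1, grid points t_i := iT/N for i = 0, …, N, and the piecewise linear path Y_N : [0,T] → ℝ^m by Y_N(t) := (1/√N) · (Z_i + θ(t) ξ_i) for t ∈ [t_i, t_{i+1}), where θ(t) := (Nt/T) − i, together with the piecewise constant derivative g(t) := (√N / T) ξ_i for t ∈ [t_i, t_{i+1}). Then the (componentwise) integral ∫₀^T Y_N(r) ⊗ g(r) dr, an m×m real matrix with (k,ℓ) entry ∫₀^T Y_N(r)_k · g(r)_ℓ dr, equals (1/N) Σ_{0 ≤ i < j ≤ N−1} ξ_i ⊗ ξ_j + (1/(2N)) Σ_{i=0}^{N−1} ξ_i ⊗ ξ_i. -/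

import Mathlib

open MeasureTheory

lemma lin_int (a b c d : ℝ) :
    (∫ r in a..b, (c + d * r)) = c * (b - a) + d * (b ^ 2 - a ^ 2) / 2 := by
  rw [intervalIntegral.integral_add (f := fun _ => c) (g := fun r => d * r) (intervalIntegrable_const)
    ((continuous_const.mul continuous_id').intervalIntegrable _ _)]
  rw [intervalIntegral.integral_const_mul, integral_id, intervalIntegral.integral_const]
  simp only [smul_eq_mul]
  ring

/-- Lemma `conv_cont_case`, deterministic computation.
With `Z_i = Σ_{ℓ<i} ξ_ℓ`, grid `t_i = iT/N`, piecewise linear `Y_N` and its piecewise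
constant derivative `g`, one has
`∫₀^T Y_N ⊗ g = (1/N) Σ_{i<j} ξ_i ⊗ ξ_j + (1/(2N)) Σ_i ξ_i ⊗ ξ_i` (entrywise). -/
theorem stmt5 (N m : ℕ) (hN : 1 ≤ N) (hm : 1 ≤ m) (T : ℝ) (hT : 0 < T)
    (ξ : ℕ → Fin m → ℝ) (Y g : ℝ → Fin m → ℝ)
    (hY : ∀ i : ℕ, i < N → ∀ t : ℝ, (i : ℝ) * T / N ≤ t → t < ((i : ℝ) + 1) * T / N →
      Y t = fun k => (1 / Real.sqrt N) *
        ((∑ ℓ ∈ Finset.range i, ξ ℓ k) + ((N : ℝ) * t / T - (i : ℝ)) * ξ i k))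
    (hg : ∀ i : ℕ, i < N → ∀ t : ℝ, (i : ℝ) * T / N ≤ t → t < ((i : ℝ) + 1) * T / N →
      g t = fun k => (Real.sqrt N / T) * ξ i k) :
    ∀ k l : Fin m,
      (∫ r in (0 : ℝ)..T, Y r k * g r l) =
        (1 / (N : ℝ)) * (∑ j ∈ Finset.range N, ∑ i ∈ Finset.range j, ξ i k * ξ j l) +
          (1 / (2 * (N : ℝ))) * ∑ i ∈ Finset.range N, ξ i k * ξ i l := by
  intro k l
  have hN0 : (N : ℝ) ≠ 0 := by positivity
  have hNpos : (0 : ℝ) < N := Nat.cast_pos.mpr hN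
  have hT0 : T ≠ 0 := ne_of_gt hT
  have hs : Real.sqrt N ≠ 0 := by positivity
  set a : ℕ → ℝ := fun i => (i : ℝ) * T / N with ha
  have hab : ∀ i : ℕ, a i ≤ a (i + 1) := by
    intro i
    simp only [ha, Nat.cast_add, Nat.cast_one]
    have h : (i : ℝ) * T ≤ ((i : ℝ) + 1) * T := by nlinarith
    exact (div_le_div_iff_of_pos_right hNpos).mpr h
  -- a.e. equality on each interval
  have hae : ∀ i : ℕ, i < N →
      (fun r => Y r k * g r l) =ᵐ[volume.restrict (Set.uIoc (a i) (a (i + 1)))]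
      (fun r => ((1 / T) * ((∑ ℓ ∈ Finset.range i, ξ ℓ k) - (i : ℝ) * ξ i k) * ξ i l)
        + ((N : ℝ) / T ^ 2 * (ξ i k * ξ i l)) * r) := by
    intro i hi
    have hne : ∀ᵐ r : ℝ ∂(volume.restrict (Set.uIoc (a i) (a (i + 1)))), r ≠ a (i + 1) := by
      apply MeasureTheory.ae_restrict_of_ae
      exact MeasureTheory.compl_mem_ae_iff.mpr (measure_singleton _)
    have hmem := MeasureTheory.ae_restrict_mem (μ := volume)
      (s := Set.uIoc (a i) (a (i + 1))) measurableSet_uIoc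
    filter_upwards [hne, hmem] with r hr hrm
    rw [Set.uIoc_of_le (hab i)] at hrm
    have h1 : a i ≤ r := hrm.1.le
    have h2 : r < a (i + 1) := lt_of_le_of_ne hrm.2 hr
    have h2' : r < ((i : ℝ) + 1) * T / N := by
      simpa [ha, Nat.cast_add, Nat.cast_one] using h2
    rw [hY i hi r h1 h2', hg i hi r h1 h2']
    have hss : (1 / Real.sqrt N) * (Real.sqrt N / T) = 1 / T := by
      field_simp
    field_simp
    ring
  -- value of each interval integral
  have key : ∀ i : ℕ, i < N →
      (∫ r in (a i)..(a (i + 1)), Y r k * g r l) =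
        (1 / (N : ℝ)) * ((∑ ℓ ∈ Finset.range i, ξ ℓ k) * ξ i l)
          + (1 / (2 * (N : ℝ))) * (ξ i k * ξ i l) := by
    intro i hi
    rw [intervalIntegral.integral_congr_ae ((ae_restrict_iff' measurableSet_uIoc).mp (hae i hi))]
    rw [lin_int]
    have hai : a i = (i : ℝ) * T / N := rfl
    have hai1 : a (i + 1) = ((i : ℝ) + 1) * T / N := by
      simp [ha, Nat.cast_add, Nat.cast_one]
    rw [hai, hai1]
    field_simp
    ring
  -- integrability on each interval
  have hint : ∀ i : ℕ, i < N →
      IntervalIntegrable (fun r => Y r k * g r l) volume (a i) (a (i + 1)) := by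
    intro i hi
    exact (((continuous_const.add (continuous_const.mul continuous_id)).intervalIntegrable
      (a i) (a (i + 1))).congr_ae (hae i hi).symm)
  have hsum := intervalIntegral.sum_integral_adjacent_intervals
    (f := fun r => Y r k * g r l) (μ := volume) (a := a) (n := N) hint
  have ha0 : a 0 = 0 := by simp [ha]
  have haN : a N = T := by rw [ha]; field_simp
  rw [ha0, haN] at hsum
  rw [← hsum]
  rw [Finset.sum_congr rfl fun i hi => key i (Finset.mem_range.mp hi)]
  rw [Finset.sum_add_distrib, ← Finset.mul_sum, ← Finset.mul_sum]
  congr 1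
  congr 1
  exact Finset.sum_congr rfl fun i _ => Finset.sum_mul _ _ _
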